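/- Let E be a finite-dimensional real inner product space, g : ℝ → ℝ a function, and Ψ̂ : ℝ × E × E → ℝ twice continuously differentiable with Ψ̂(t,x,v) > 0 for all (t,x,v), satisfying the PDE ∂Ψ̂/∂t = (1/2)·g(t)²·Δ_v Ψ̂ − ⟪∇_x Ψ̂, v⟫ at every (t,x,v). Then ŷ := log ∘ Ψ̂ satisfies, for all (t,x,v), ∂ŷ/∂t(t,x,v) = −⟪v, ∇_x ŷ(t,x,v)⟫ + (1/2)·g(t)²·(Δ_v ŷ(t,x,v) + ‖∇_v ŷ(t,x,v)‖²). -/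

import Mathlib

open scoped Gradient RealInnerProductSpace

/-- The Laplacian of `f : E → ℝ` at `x`: the trace of the second derivative, computed as the sum
of the second derivative evaluated along an orthonormal basis. -/
noncomputable def laplacian {E : Type*} [NormedAddCommGroup E] [InnerProductSpace ℝ E]
    [FiniteDimensional ℝ E] (f : E → ℝ) (x : E) : ℝ :=
  ∑ i, iteratedFDeriv ℝ 2 f x ![stdOrthonormalBasis ℝ E i, stdOrthonormalBasis ℝ E i]

section Aux

variable {E : Type*} [NormedAddCommGroup E] [InnerProductSpace ℝ E] [FiniteDimensional ℝ E]

lemma inner_gradient_eq_fderiv (f : E → ℝ) (x u : E) : ⟪∇ f x, u⟫ = fderiv ℝ f x u := by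
  simpa [gradient] using (InnerProductSpace.toDual_symm_apply (𝕜 := ℝ) (E := E))

lemma gradient_log_comp (f : E → ℝ) {x : E} (hf : DifferentiableAt ℝ f x) (hpos : f x ≠ 0) :
    ∇ (fun y => Real.log (f y)) x = (f x)⁻¹ • ∇ f x := by
  simp only [gradient, (hf.hasFDerivAt.log hpos).fderiv, map_smul]

lemma fderiv_log_comp (f : E → ℝ) (hf : Differentiable ℝ f) (hpos : ∀ y, 0 < f y) :
    fderiv ℝ (fun y => Real.log (f y)) = fun x => (f x)⁻¹ • fderiv ℝ f x := by
  funext x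
  exact ((hf x).hasFDerivAt.log (hpos x).ne').fderiv

lemma second_fderiv_log (f : E → ℝ) (hf : ContDiff ℝ 2 f) (hpos : ∀ y, 0 < f y) (x u : E) :
    fderiv ℝ (fderiv ℝ (fun y => Real.log (f y))) x u u
      = (f x)⁻¹ * fderiv ℝ (fderiv ℝ f) x u u - ((f x)⁻¹) ^ 2 * (fderiv ℝ f x u) ^ 2 := by
  have hd : Differentiable ℝ f := hf.differentiable (by norm_num)
  rw [fderiv_log_comp f hd hpos]
  have hf2 : HasFDerivAt (fderiv ℝ f) (fderiv ℝ (fderiv ℝ f) x) x :=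
    (((hf.fderiv_right (m := 1) (by norm_num)).differentiable one_ne_zero) x).hasFDerivAt
  have hinv : HasFDerivAt (fun y => (f y)⁻¹)
      ((ContinuousLinearMap.smulRight (1 : ℝ →L[ℝ] ℝ) (-(f x ^ 2)⁻¹)).comp (fderiv ℝ f x)) x :=
    (hasFDerivAt_inv (hpos x).ne').comp x (hd x).hasFDerivAt
  have := HasFDerivAt.fderiv (f := fun y => (f y)⁻¹ • fderiv ℝ f y) (hinv.smul hf2)
  rw [this]
  simp only [ContinuousLinearMap.add_apply, ContinuousLinearMap.smul_apply,
    ContinuousLinearMap.smulRight_apply, ContinuousLinearMap.comp_apply,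
    ContinuousLinearMap.one_apply, smul_eq_mul]
  have hne := (hpos x).ne'
  field_simp
  ring

lemma laplacian_log (f : E → ℝ) (hf : ContDiff ℝ 2 f) (hpos : ∀ y, 0 < f y) (x : E) :
    laplacian (fun y => Real.log (f y)) x
      = (f x)⁻¹ * laplacian f x - ((f x)⁻¹) ^ 2 * ‖∇ f x‖ ^ 2 := by
  have hnorm : ‖∇ f x‖ ^ 2 = ∑ i, ⟪∇ f x, stdOrthonormalBasis ℝ E i⟫ ^ 2 := by
    rw [← real_inner_self_eq_norm_sq, ← (stdOrthonormalBasis ℝ E).sum_inner_mul_inner (∇ f x)]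
    refine Finset.sum_congr rfl fun i _ => ?_
    rw [sq, real_inner_comm (∇ f x)]
  simp only [laplacian, iteratedFDeriv_two_apply, Matrix.cons_val_zero, Matrix.cons_val_one,
    Matrix.head_cons, hnorm]
  rw [Finset.mul_sum, Finset.mul_sum, ← Finset.sum_sub_distrib]
  refine Finset.sum_congr rfl fun i _ => ?_
  rw [second_fderiv_log f hf hpos, inner_gradient_eq_fderiv]

end Aux

/-- The backward log-potential `ŷ = log Ψ̂` solves the phase-space HJB-type equation. -/
theorem log_potential_backward_pde {E : Type*} [NormedAddCommGroup E]
    [InnerProductSpace ℝ E] [FiniteDimensional ℝ E]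
    (g : ℝ → ℝ) (Ψhat : ℝ → E → E → ℝ)
    (hΨhat : ContDiff ℝ 2 fun p : ℝ × E × E => Ψhat p.1 p.2.1 p.2.2)
    (hΨhatpos : ∀ (t : ℝ) (x v : E), 0 < Ψhat t x v)
    (hPDE : ∀ (t : ℝ) (x v : E),
      deriv (fun s => Ψhat s x v) t
        = (1/2) * g t ^ 2 * laplacian (fun w => Ψhat t x w) v
          - ⟪∇ (fun y => Ψhat t y v) x, v⟫) :
    ∀ (t : ℝ) (x v : E),
      deriv (fun s => Real.log (Ψhat s x v)) t
        = -⟪v, ∇ (fun y => Real.log (Ψhat t y v)) x⟫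
          + (1/2) * g t ^ 2 * (laplacian (fun w => Real.log (Ψhat t x w)) v
              + ‖∇ (fun w => Real.log (Ψhat t x w)) v‖ ^ 2) := by
  intro t x v
  set c := Ψhat t x v with hc
  have hcpos : 0 < c := hΨhatpos t x v
  -- component regularity
  have hfw : ContDiff ℝ 2 (fun w => Ψhat t x w) :=
    hΨhat.comp (contDiff_const.prodMk (contDiff_const.prodMk contDiff_id))
  have hfx : ContDiff ℝ 2 (fun y => Ψhat t y v) :=
    hΨhat.comp (contDiff_const.prodMk (contDiff_id.prodMk contDiff_const))
  have hft : Differentiable ℝ (fun s => Ψhat s x v) := by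
    have h : Differentiable ℝ
        ((fun p : ℝ × E × E => Ψhat p.1 p.2.1 p.2.2) ∘ fun s : ℝ => (s, x, v)) :=
      (hΨhat.differentiable (by norm_num)).comp (differentiable_id.prodMk (differentiable_const _))
    exact h
  -- time derivative of the log
  have hderiv : deriv (fun s => Real.log (Ψhat s x v)) t = deriv (fun s => Ψhat s x v) t / c :=
    (((hft t).hasDerivAt).log hcpos.ne').deriv
  -- spatial gradient of the log
  have hgradx : ∇ (fun y => Real.log (Ψhat t y v)) x = c⁻¹ • ∇ (fun y => Ψhat t y v) x :=
    gradient_log_comp _ ((hfx.differentiable (by norm_num)) x) hcpos.ne'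
  have hgradv : ∇ (fun w => Real.log (Ψhat t x w)) v = c⁻¹ • ∇ (fun w => Ψhat t x w) v :=
    gradient_log_comp _ ((hfw.differentiable (by norm_num)) v) hcpos.ne'
  have hlap : laplacian (fun w => Real.log (Ψhat t x w)) v
      = c⁻¹ * laplacian (fun w => Ψhat t x w) v - (c⁻¹) ^ 2 * ‖∇ (fun w => Ψhat t x w) v‖ ^ 2 :=
    laplacian_log _ hfw (hΨhatpos t x) v
  rw [hderiv, hPDE t x v, hgradx, hgradv, hlap]
  rw [norm_smul, real_inner_smul_right, real_inner_comm]
  rw [Real.norm_eq_abs, abs_of_pos (by positivity : (0:ℝ) < c⁻¹), mul_pow]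
  field_simp
  ring
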